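/- Let n ∈ ℕ and q ∈ ℂ with q ≠ 0, and let Λ(q) be the diagonal (n+1)×(n+1) matrix with diagonal entries q^{-(n-r)r} for r = 0,…,n. Then σ₁(q,n)·Λ(q)·σ₂(q,n)·σ₁(q,n) = S(q) and σ₂(q,n)·σ₁(q,n)·Λ(q)·σ₂(q,n) = S(q). -/

import Mathlib

/-- The Gaussian ($q$-)binomial coefficient `C(n,k)_q`, defined by the recursion
`C(n+1,k)_q = C(n,k-1)_q + q^k * C(n,k)_q`, with `C(n,0)_q = C(n,n)_q = 1` and
`C(n,k)_q = 0` for `k > n`. -/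
noncomputable def qBinom (q : ℂ) : ℕ → ℕ → ℂ
  | 0, 0 => 1
  | 0, _ + 1 => 0
  | _ + 1, 0 => 1
  | n + 1, k + 1 => qBinom q n k + q ^ (k + 1) * qBinom q n (k + 1)

def e2 : ℕ → ℕ
  | 0 => 0
  | k + 1 => e2 k + k

@[simp] lemma e2_zero : e2 0 = 0 := rfl
@[simp] lemma e2_succ (k : ℕ) : e2 (k + 1) = e2 k + k := rfl

lemma e2_add (a b : ℕ) : e2 (a + b) = e2 a + e2 b + a * b := by
  induction b with
  | zero => simp
  | succ b ih => rw [← Nat.add_assoc, e2_succ, ih, e2_succ, Nat.mul_succ]; omega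

lemma e2_eq (k : ℕ) : k * (k - 1) / 2 = e2 k := by
  have h : k * (k-1) / 2 = k.choose 2 := (Nat.choose_two_right k).symm
  rw [h]; clear h
  induction k with
  | zero => rfl
  | succ k ih => rw [Nat.choose_succ_succ, ih, Nat.choose_one_right, e2_succ]; omega

section basics
variable (q : ℂ)

@[simp] lemma qBinom_zero_right (n : ℕ) : qBinom q n 0 = 1 := by cases n <;> rfl

lemma qBinom_succ (n k : ℕ) :
    qBinom q (n+1) (k+1) = qBinom q n k + q ^ (k + 1) * qBinom q n (k + 1) := rfl

lemma qBinom_eq_zero : ∀ {n k : ℕ}, n < k → qBinom q n k = 0 := by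
  intro n
  induction n with
  | zero => intro k hk; match k, hk with | (k+1), _ => rfl
  | succ n ih =>
    intro k hk
    match k, hk with
    | (k+1), hk =>
      rw [qBinom_succ, ih (by omega), ih (by omega)]
      ring

@[simp] lemma qBinom_self : ∀ n : ℕ, qBinom q n n = 1 := by
  intro n
  induction n with
  | zero => rfl
  | succ n ih => rw [qBinom_succ, ih, qBinom_eq_zero q (by omega)]; ring

lemma qBinom_def1 (n : ℕ) : qBinom q (n+1) 1 = 1 + q * qBinom q n 1 := by
  have := qBinom_succ q n 0
  norm_num at this
  rw [this]

lemma qBinom_one_succ (n : ℕ) : qBinom q (n+1) 1 = q ^ n + qBinom q n 1 := by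
  induction n with
  | zero => rw [qBinom_def1]; simp [show qBinom q 0 1 = 0 from rfl]
  | succ n ih =>
    conv_lhs => rw [qBinom_def1, ih]
    rw [qBinom_def1]
    ring

lemma qBinom_pascal2 : ∀ n k r : ℕ, k + r = n →
    qBinom q (n+1) (k+1) = q ^ r * qBinom q n k + qBinom q n (k+1) := by
  intro n
  induction n with
  | zero =>
    intro k r h
    obtain ⟨rfl, rfl⟩ : k = 0 ∧ r = 0 := by omega
    simp [show qBinom q 0 1 = 0 from rfl, show qBinom q 1 1 = 1 from qBinom_self q 1]
  | succ n ih =>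
    intro k r h
    match k with
    | 0 =>
      have hr : r = n + 1 := by omega
      subst hr
      rw [qBinom_one_succ, qBinom_zero_right]; ring
    | (k'+1) =>
      match r with
      | 0 =>
        have : k' + 1 = n + 1 := by omega
        rw [this]
        rw [qBinom_self, qBinom_self, qBinom_eq_zero q (by omega)]; ring
      | (r'+1) =>
        have h1 : k' + (r'+1) = n := by omega
        have h2 : (k'+1) + r' = n := by omega
        have i1 := ih k' (r'+1) h1
        have i2 := ih (k'+1) r' h2
        have d1 := qBinom_succ q n k'
        have d2 := qBinom_succ q n (k'+1)
        calc qBinom q (n+1+1) (k'+1+1)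
            = qBinom q (n+1) (k'+1) + q ^ (k'+1+1) * qBinom q (n+1) (k'+1+1) :=
              qBinom_succ q (n+1) (k'+1)
          _ = (q ^ (r'+1) * qBinom q n k' + qBinom q n (k'+1))
              + q ^ (k'+1+1) * (q ^ r' * qBinom q n (k'+1) + qBinom q n (k'+1+1)) := by
              rw [i1, i2]
          _ = q ^ (r'+1) * (qBinom q n k' + q ^ (k'+1) * qBinom q n (k'+1))
              + (qBinom q n (k'+1) + q ^ (k'+1+1) * qBinom q n (k'+1+1)) := by ring
          _ = q ^ (r'+1) * qBinom q (n+1) (k'+1) + qBinom q (n+1) (k'+1+1) := by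
              rw [← d1, ← d2]
end basics

section more
variable (q : ℂ)

lemma qBinom_symm : ∀ n k r : ℕ, k + r = n → qBinom q n k = qBinom q n r := by
  intro n
  induction n with
  | zero =>
    intro k r h
    obtain ⟨rfl, rfl⟩ : k = 0 ∧ r = 0 := by omega
    rfl
  | succ n ih =>
    intro k r h
    match k, r with
    | 0, r => have : r = n+1 := by omega
              subst this; rw [qBinom_zero_right, qBinom_self]
    | (k'+1), 0 => have : k' + 1 = n+1 := by omega
                   rw [this, qBinom_zero_right, qBinom_self]
    | (k'+1), (r'+1) =>
      have h1 : k' + (r'+1) = n := by omega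
      have h2 : (r'+1) + k' = n := by omega
      rw [qBinom_succ q n k', ih k' (r'+1) h1, ih (k'+1) r' (by omega),
        qBinom_pascal2 q n r' (k'+1) (by omega)]
      ring

lemma qBinom_inv (hq : q ≠ 0) : ∀ n k r : ℕ, k + r = n →
    qBinom q⁻¹ n k = q ^ (-(k * r : ℕ) : ℤ) * qBinom q n k := by
  intro n
  induction n with
  | zero =>
    intro k r h
    obtain ⟨rfl, rfl⟩ : k = 0 ∧ r = 0 := by omega
    simp
  | succ n ih =>
    intro k r h
    match k, r with
    | 0, r => simp
    | (k'+1), 0 =>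
      have : k' + 1 = n+1 := by omega
      rw [this, qBinom_self, qBinom_self]
      simp
    | (k'+1), (r'+1) =>
      have i1 := ih k' (r'+1) (by omega)
      have i2 := ih (k'+1) r' (by omega)
      rw [qBinom_succ q⁻¹ n k', i1, i2,
        qBinom_pascal2 q n k' (r'+1) (by omega)]
      rw [inv_pow, ← zpow_natCast q (k'+1), ← zpow_neg]
      rw [← zpow_natCast q (r'+1)]
      rw [← mul_assoc, ← zpow_add₀ hq]
      conv_rhs => rw [mul_add, ← mul_assoc, ← zpow_add₀ hq]
      congr 3 <;> push_cast <;> ring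

end more

lemma zmul1 (q : ℂ) (hq : q ≠ 0) (a b : ℤ) (x : ℂ) : q^a * (q^b * x) = q^(a+b) * x := by
  rw [← mul_assoc, ← zpow_add₀ hq]

lemma f1 (q : ℂ) (a : ℤ) (n k : ℕ) (y : ℂ) :
    qBinom q n k * (q^a * y) = q^a * (qBinom q n k * y) := by ring
lemma f2 (q : ℂ) (a : ℤ) (n k : ℕ) : qBinom q n k * q^a = q^a * qBinom q n k := by ring
lemma f3 (q : ℂ) (a : ℤ) (i : ℕ) (y : ℂ) :
    (-1:ℂ)^i * (q^a * y) = q^a * ((-1:ℂ)^i * y) := by ring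
lemma f4 (q : ℂ) (a : ℤ) (i : ℕ) : (-1:ℂ)^i * q^a = q^a * (-1:ℂ)^i := by ring

noncomputable def bterm (q : ℂ) (k t i : ℕ) : ℂ :=
  (-1:ℂ)^i * q ^ (-(e2 i : ℤ) - (i:ℤ) * ((k:ℤ) - (i:ℤ))) * qBinom q k i * qBinom q i t

section lemB
variable (q : ℂ)

lemma lemB (hq : q ≠ 0) : ∀ k m : ℕ,
    ∑ i ∈ Finset.range (k+1), bterm q k m i
      = if k = m then (-1:ℂ)^k * q ^ (-(e2 k : ℤ)) else 0 := by
  intro k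
  induction k with
  | zero =>
    intro m
    match m with
    | 0 => simp [bterm]
    | (m+1) => simp [bterm, show qBinom q 0 (m+1) = 0 from rfl]
  | succ k ih =>
    intro m
    have hshift : ∀ t, ∑ i ∈ Finset.range (k+1), bterm q k t (i+1)
        = (if k = t then (-1:ℂ)^k * q ^ (-(e2 k:ℤ)) else 0) - qBinom q 0 t := by
      intro t
      have h1 := Finset.sum_range_succ' (bterm q k t) (k+1)
      have h2 := Finset.sum_range_succ (bterm q k t) (k+1)
      have h3 : bterm q k t (k+1) = 0 := by
        simp [bterm, qBinom_eq_zero q (Nat.lt_succ_self k)]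
      have h4 : bterm q k t 0 = qBinom q 0 t := by simp [bterm]
      rw [h3, add_zero] at h2
      rw [h2, h4] at h1
      rw [ih t] at h1
      linear_combination -h1
    rw [Finset.sum_range_succ']
    match m with
    | 0 =>
      have key : ∀ i ∈ Finset.range (k+1), bterm q (k+1) 0 (i+1)
          = -(q ^ (-(k:ℤ)) * bterm q k 0 i) + bterm q k 0 (i+1) := by
        intro i _
        simp only [bterm, qBinom_succ, e2_succ, qBinom_zero_right]
        push_cast
        simp only [← zpow_natCast q]
        simp only [mul_add, add_mul, mul_assoc, neg_mul, mul_neg, f1, f2, f3, f4, zmul1 q hq,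
          ← zpow_add₀ hq]
        push_cast
        ring_nf
      rw [Finset.sum_congr rfl key]
      simp only [Finset.sum_add_distrib, Finset.sum_neg_distrib, ← Finset.mul_sum]
      rw [hshift 0, ih 0]
      have hb0 : bterm q (k+1) 0 0 = 1 := by norm_num [bterm]
      rw [hb0, if_neg (show ¬ k + 1 = 0 by omega)]
      by_cases hk : k = 0
      · subst hk; norm_num
      · rw [if_neg hk]; norm_num
    | (m'+1) =>
      have key : ∀ i ∈ Finset.range (k+1), bterm q (k+1) (m'+1) (i+1)
          = -(q ^ (-(k:ℤ)) * bterm q k m' i)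
            + (-(q ^ ((m':ℤ)+1-(k:ℤ)) * bterm q k (m'+1) i) + bterm q k (m'+1) (i+1)) := by
        intro i _
        simp only [bterm, qBinom_succ, e2_succ]
        push_cast
        simp only [← zpow_natCast q]
        simp only [mul_add, add_mul, mul_assoc, neg_mul, mul_neg, f1, f2, f3, f4, zmul1 q hq,
          ← zpow_add₀ hq]
        push_cast
        ring_nf
      rw [Finset.sum_congr rfl key]
      simp only [Finset.sum_add_distrib, Finset.sum_neg_distrib, ← Finset.mul_sum]
      rw [hshift (m'+1), ih m', ih (m'+1)]
      have hb0 : bterm q (k+1) (m'+1) 0 = 0 := by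
        simp [bterm, show qBinom q 0 (m'+1) = 0 from rfl]
      rw [hb0, show qBinom q 0 (m'+1) = 0 from rfl]
      by_cases h1 : k = m'
      · subst h1
        rw [if_pos rfl, if_pos rfl, if_neg (show ¬ k = k + 1 by omega)]
        simp only [mul_add, add_mul, mul_assoc, neg_mul, mul_neg, f1, f2, f3, f4, zmul1 q hq,
          ← zpow_add₀ hq]
        push_cast [e2_succ]
        ring_nf
      · rw [if_neg h1]
        by_cases h2 : k = m'+1
        · subst h2
          rw [if_pos rfl, if_neg (show ¬ (m'+1) + 1 = m' + 1 by omega)]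
          have hz : (m':ℤ) + 1 - (((m'+1 : ℕ)):ℤ) = 0 := by push_cast; ring
          rw [hz, zpow_zero]
          ring
        · rw [if_neg h2, if_neg (show ¬ k + 1 = m' + 1 by omega)]
          ring

end lemB

noncomputable def aterm (q : ℂ) (n k m j : ℕ) : ℂ :=
  (-1:ℂ)^j * q ^ (-(e2 j : ℤ) - (j:ℤ) * ((n:ℤ) - (j:ℤ))) * qBinom q (n-k) (n-j) * qBinom q j m

noncomputable def aRHS (q : ℂ) (n k m : ℕ) : ℂ :=
  (-1:ℂ)^n * q ^ (-(e2 m : ℤ) - (e2 (n-m) : ℤ) - ((n-m : ℕ) : ℤ) * ((k:ℤ) + (m:ℤ) - (n:ℤ)))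
    * qBinom q k (n-m)

section lemA
variable (q : ℂ)

lemma lemA_top (hq : q ≠ 0) (n k : ℕ) (hk : k ≤ n) :
    ∑ j ∈ Finset.range (n+1), aterm q n k n j = aRHS q n k n := by
  rw [Finset.sum_eq_single_of_mem n (Finset.self_mem_range_succ n)]
  · simp only [aterm, aRHS, Nat.sub_self, qBinom_self, qBinom_zero_right, e2_zero]
    push_cast
    ring_nf
  · intro j hj hjn
    have : j < n := by simp only [Finset.mem_range] at hj; omega
    simp [aterm, qBinom_eq_zero q this]

lemma lemA (hq : q ≠ 0) : ∀ a n k m : ℕ, k + a = n → m ≤ n →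
    ∑ j ∈ Finset.range (n+1), aterm q n k m j = aRHS q n k m := by
  intro a
  induction a with
  | zero =>
    intro n k m hk hm
    obtain ⟨r, rfl⟩ : ∃ r, n = m + r := ⟨n - m, by omega⟩
    obtain rfl : k = m + r := by omega
    rw [Finset.sum_eq_single_of_mem (m+r) (Finset.self_mem_range_succ _)]
    · simp only [aterm, aRHS, Nat.sub_self, qBinom_self, qBinom_zero_right,
        Nat.add_sub_cancel_left]
      rw [qBinom_symm q (m+r) r m (by omega), e2_add]
      push_cast
      simp only [mul_add, add_mul, mul_assoc, neg_mul, mul_neg, f1, f2, f3, f4, zmul1 q hq,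
        ← zpow_add₀ hq]
      push_cast
      ring_nf
    · intro j hj hjn
      have hz : qBinom q 0 (m+r-j) = 0 := by
        apply qBinom_eq_zero
        simp only [Finset.mem_range] at hj
        omega
      simp [aterm, Nat.sub_self, hz]
  | succ a iha =>
    intro n k m hk hm
    obtain ⟨N, rfl⟩ : ∃ N, n = N + 1 := ⟨n - 1, by omega⟩
    by_cases hmn : m = N + 1
    · subst hmn; exact lemA_top q hq (N+1) k (by omega)
    · have hm' : m ≤ N := by omega
      have hkN : k ≤ N := by omega
      have htop : aterm q (N+1) k m (N+1) = aterm q (N+1) (k+1) m (N+1) := by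
        simp [aterm, Nat.sub_self]
      have key : ∀ j ∈ Finset.range (N+1), aterm q (N+1) k m j
          = aterm q (N+1) (k+1) m j + q^(-(k:ℤ)) * aterm q N k m j := by
        intro j hj
        simp only [Finset.mem_range] at hj
        have hjN : j ≤ N := by omega
        by_cases hjk : j < k
        · have z1 : qBinom q (N+1-k) (N+1-j) = 0 := qBinom_eq_zero q (by omega)
          have z2 : qBinom q (N-k) (N+1-j) = 0 := qBinom_eq_zero q (by omega)
          have z3 : qBinom q (N-k) (N-j) = 0 := qBinom_eq_zero q (by omega)
          simp [aterm, z1, z2, z3]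
        · obtain ⟨i, rfl⟩ : ∃ i, j = k + i := ⟨j - k, by omega⟩
          have hp := qBinom_pascal2 q (N-k) (N-(k+i)) i (by omega)
          simp only [aterm]
          rw [show N+1-k = (N-k)+1 from by omega, show N+1-(k+i) = (N-(k+i))+1 from by omega,
            show N+1-(k+1) = N-k from by omega]
          rw [hp]
          simp only [← zpow_natCast q]
          simp only [mul_add, add_mul, mul_assoc, neg_mul, mul_neg, f1, f2, f3, f4, zmul1 q hq,
            ← zpow_add₀ hq]
          push_cast
          ring_nf
      rw [Finset.sum_range_succ, Finset.sum_congr rfl key, htop, Finset.sum_add_distrib,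
        ← Finset.mul_sum]
      have hA : (∑ x ∈ Finset.range (N+1), aterm q (N+1) (k+1) m x)
          + aterm q (N+1) (k+1) m (N+1) = aRHS q (N+1) (k+1) m := by
        rw [← Finset.sum_range_succ]
        exact iha (N+1) (k+1) m (by omega) (by omega)
      have hB := iha N k m (by omega) hm'
      have hscal : aRHS q (N+1) (k+1) m + q^(-(k:ℤ)) * aRHS q N k m = aRHS q (N+1) k m := by
        obtain ⟨d, rfl⟩ : ∃ d, N = m + d := ⟨N - m, by omega⟩
        simp only [aRHS]
        rw [show m + d + 1 - m = d+1 from by omega, show m + d - m = d from by omega,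
          qBinom_succ q k d]
        simp only [e2_succ]
        simp only [← zpow_natCast q]
        simp only [mul_add, add_mul, mul_assoc, neg_mul, mul_neg, f1, f2, f3, f4, zmul1 q hq,
          ← zpow_add₀ hq]
        push_cast
        ring_nf
      linear_combination hA + hscal + q^(-(k:ℤ)) * hB

end lemA

/-- The matrix `σ₁(q,n)` with entries `σ₁(q,n)_{km} = C(n-k, n-m)_q`. -/
noncomputable def sigma1 (q : ℂ) (n : ℕ) : Matrix (Fin (n + 1)) (Fin (n + 1)) ℂ :=
  fun k m => qBinom q (n - k.val) (n - m.val)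

/-- The matrix `σ₂(q,n)` with entries
`σ₂(q,n)_{km} = (-1)^{k+m} q^{-(k-m)(k-m-1)/2} C(k,m)_{q⁻¹}` for `m ≤ k`, and `0` otherwise. -/
noncomputable def sigma2 (q : ℂ) (n : ℕ) : Matrix (Fin (n + 1)) (Fin (n + 1)) ℂ :=
  fun k m =>
    if m.val ≤ k.val then
      (-1 : ℂ) ^ (k.val + m.val) *
        q ^ (-(((k.val - m.val) * (k.val - m.val - 1) / 2 : ℕ) : ℤ)) *
        qBinom q⁻¹ k.val m.val
    else 0

/-- The matrix `S(q)` with entries `S(q)_{km} = (-1)^k q^{-k(k-1)/2}` when `k+m = n`,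
and `0` otherwise. -/
noncomputable def Smat (q : ℂ) (n : ℕ) : Matrix (Fin (n + 1)) (Fin (n + 1)) ℂ :=
  fun k m =>
    if k.val + m.val = n then (-1 : ℂ) ^ k.val * q ^ (-((k.val * (k.val - 1) / 2 : ℕ) : ℤ))
    else 0

/-- `A^♯`, the matrix with entries `(A^♯)_{ij} = A_{n-i, n-j}`. -/
noncomputable def msharp {n : ℕ} (A : Matrix (Fin (n + 1)) (Fin (n + 1)) ℂ) :
    Matrix (Fin (n + 1)) (Fin (n + 1)) ℂ :=
  fun i j => A i.rev j.rev

lemma neg_one_pow_congr' (a b : ℕ) (h : a % 2 = b % 2) : (-1:ℂ)^a = (-1:ℂ)^b := by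
  rcases Nat.even_or_odd a with h1 | h1
  · have h2 : Even b := Nat.even_iff.2 (by rw [← h]; exact Nat.even_iff.1 h1)
    rw [h1.neg_one_pow, h2.neg_one_pow]
  · have h2 : Odd b := Nat.odd_iff.2 (by rw [← h]; exact Nat.odd_iff.1 h1)
    rw [h1.neg_one_pow, h2.neg_one_pow]

section mats
variable (q : ℂ) (n : ℕ)

lemma sigma2_eq (hq : q ≠ 0) (k m : Fin (n+1)) :
    sigma2 q n k m
      = (-1:ℂ)^(k:ℕ) * q ^ (-(e2 (k:ℕ) : ℤ)) * qBinom q (k:ℕ) (m:ℕ)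
        * ((-1:ℂ)^(m:ℕ) * q ^ ((e2 (m:ℕ) : ℤ))) := by
  show (if (m:ℕ) ≤ (k:ℕ) then _ else 0) = _
  by_cases h : (m:ℕ) ≤ (k:ℕ)
  · rw [if_pos h]
    obtain ⟨r, hr⟩ : ∃ r, (k:ℕ) = (m:ℕ) + r := ⟨(k:ℕ) - (m:ℕ), by omega⟩
    rw [hr, Nat.add_sub_cancel_left, e2_eq, qBinom_inv q hq ((m:ℕ)+r) (m:ℕ) r rfl, e2_add]
    push_cast
    simp only [mul_add, add_mul, mul_assoc, neg_mul, mul_neg, f1, f2, f3, f4, zmul1 q hq,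
      ← zpow_add₀ hq]
    push_cast
    ring_nf
  · rw [if_neg h, qBinom_eq_zero q (by omega)]
    ring

lemma Smat_eq (k m : Fin (n+1)) :
    Smat q n k m = if (k:ℕ) + (m:ℕ) = n then (-1:ℂ)^(k:ℕ) * q ^ (-(e2 (k:ℕ) : ℤ)) else 0 := by
  show (if (k:ℕ) + (m:ℕ) = n then _ else 0) = _
  rw [e2_eq]

end mats

section main
variable (q : ℂ) (n : ℕ)

lemma hB_entry (hq : q ≠ 0) (k m : Fin (n+1)) :
    (sigma1 q n * Matrix.diagonal (fun r : Fin (n + 1) =>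
        q ^ (-(((n - r.val) * r.val : ℕ) : ℤ))) * sigma2 q n) k m
      = (-1:ℂ)^(m:ℕ) * q ^ ((e2 (m:ℕ) : ℤ)) * aRHS q n (k:ℕ) (m:ℕ) := by
  rw [Matrix.mul_apply]
  have step : ∀ j : Fin (n+1),
      (sigma1 q n * Matrix.diagonal (fun r : Fin (n + 1) =>
        q ^ (-(((n - r.val) * r.val : ℕ) : ℤ)))) k j * sigma2 q n j m
      = ((-1:ℂ)^(m:ℕ) * q ^ ((e2 (m:ℕ) : ℤ))) * aterm q n (k:ℕ) (m:ℕ) (j:ℕ) := by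
    intro j
    rw [Matrix.mul_diagonal, sigma2_eq q n hq]
    show qBinom q (n - (k:ℕ)) (n - (j:ℕ)) * _ * _ = _
    rw [aterm]
    have hc : (((n - (j:ℕ)) * (j:ℕ) : ℕ) : ℤ) = ((n:ℤ) - (j:ℕ)) * (j:ℕ) := by
      have := j.isLt; push_cast [Nat.cast_sub (by omega : (j:ℕ) ≤ n)]; ring
    rw [hc]
    simp only [mul_add, add_mul, mul_assoc, neg_mul, mul_neg, f1, f2, f3, f4, zmul1 q hq,
      ← zpow_add₀ hq]
    ring_nf
  rw [Finset.sum_congr rfl (fun j _ => step j)]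
  rw [Fin.sum_univ_eq_sum_range
    (fun j => ((-1:ℂ)^(m:ℕ) * q ^ ((e2 (m:ℕ) : ℤ))) * aterm q n (k:ℕ) (m:ℕ) j) (n+1)]
  rw [← Finset.mul_sum, lemA q hq (n - (k:ℕ)) n (k:ℕ) (m:ℕ) (by omega) (by omega)]

lemma hBS_entry (hq : q ≠ 0) (k m : Fin (n+1)) :
    ((sigma1 q n * Matrix.diagonal (fun r : Fin (n + 1) =>
        q ^ (-(((n - r.val) * r.val : ℕ) : ℤ))) * sigma2 q n) * sigma1 q n) k m
      = Smat q n k m := by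
  rw [Matrix.mul_apply]
  have step : ∀ j : Fin (n+1),
      (sigma1 q n * Matrix.diagonal (fun r : Fin (n + 1) =>
        q ^ (-(((n - r.val) * r.val : ℕ) : ℤ))) * sigma2 q n) k j * sigma1 q n j m
      = ((-1:ℂ)^(j:ℕ) * q ^ ((e2 (j:ℕ) : ℤ)) * aRHS q n (k:ℕ) (j:ℕ))
          * qBinom q (n - (j:ℕ)) (n - (m:ℕ)) := by
    intro j
    rw [hB_entry q n hq]
    rfl
  rw [Finset.sum_congr rfl (fun j _ => step j)]
  rw [Fin.sum_univ_eq_sum_range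
    (fun j => ((-1:ℂ)^j * q ^ ((e2 j : ℤ)) * aRHS q n (k:ℕ) j) * qBinom q (n - j) (n - (m:ℕ)))
    (n+1)]
  rw [← Finset.sum_range_reflect]
  have step2 : ∀ i ∈ Finset.range (n+1),
      ((-1:ℂ)^(n+1-1-i) * q ^ ((e2 (n+1-1-i) : ℤ)) * aRHS q n (k:ℕ) (n+1-1-i))
          * qBinom q (n - (n+1-1-i)) (n - (m:ℕ))
      = bterm q (k:ℕ) (n - (m:ℕ)) i := by
    intro i hi
    simp only [Finset.mem_range] at hi
    rw [show n+1-1-i = n-i from by omega, show n - (n-i) = i from by omega]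
    rw [aRHS, bterm, show n - (n-i) = i from by omega]
    rw [neg_one_pow_congr' (n - i) (n + i) (by omega), pow_add]
    have hc1 : ((n - i : ℕ) : ℤ) = (n:ℤ) - i := by omega
    have hc2 : ((i : ℕ) : ℤ) * ((k:ℕ) + ((n-i:ℕ):ℤ) - n) = (i:ℤ) * (((k:ℕ):ℤ) - i) := by
      rw [hc1]; ring
    simp only [hc1]
    simp only [mul_add, add_mul, mul_assoc, neg_mul, mul_neg, f1, f2, f3, f4, zmul1 q hq,
      ← zpow_add₀ hq]
    push_cast
    ring_nf
    rw [neg_one_pow_congr' (n * 2) 0 (by omega), pow_zero, mul_one]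
  rw [Finset.sum_congr rfl step2]
  have hsub : ∑ i ∈ Finset.range (n+1), bterm q (k:ℕ) (n - (m:ℕ)) i
      = ∑ i ∈ Finset.range ((k:ℕ)+1), bterm q (k:ℕ) (n - (m:ℕ)) i := by
    symm
    apply Finset.sum_subset (Finset.range_subset_range.2 (by omega))
    intro i hi hni
    simp only [Finset.mem_range] at hi hni
    simp [bterm, qBinom_eq_zero q (by omega : (k:ℕ) < i)]
  rw [hsub, lemB q hq (k:ℕ) (n - (m:ℕ)), Smat_eq]
  by_cases hc : (k:ℕ) + (m:ℕ) = n
  · rw [if_pos (by omega), if_pos hc]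
  · rw [if_neg (by omega), if_neg hc]

end main

section final
variable (q : ℂ) (n : ℕ)

lemma hS2S1 (hq : q ≠ 0) : sigma2 q n * Smat q n = Smat q n * sigma1 q n := by
  ext k m
  rw [Matrix.mul_apply, Matrix.mul_apply]
  have hm : (m:ℕ) ≤ n := by omega
  have hk : (k:ℕ) ≤ n := by omega
  have hL : (∑ j : Fin (n+1), sigma2 q n k j * Smat q n j m)
      = sigma2 q n k ⟨n - (m:ℕ), by omega⟩ * Smat q n ⟨n - (m:ℕ), by omega⟩ m := by
    apply Finset.sum_eq_single_of_mem _ (Finset.mem_univ _)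
    intro b _ hb
    have hbv : ¬ ((b:ℕ) + (m:ℕ) = n) := by
      simp only [ne_eq, Fin.ext_iff, Fin.val_mk] at hb
      omega
    rw [Smat_eq, if_neg hbv, mul_zero]
  have hR : (∑ j : Fin (n+1), Smat q n k j * sigma1 q n j m)
      = Smat q n k ⟨n - (k:ℕ), by omega⟩ * sigma1 q n ⟨n - (k:ℕ), by omega⟩ m := by
    apply Finset.sum_eq_single_of_mem _ (Finset.mem_univ _)
    intro b _ hb
    have hbv : ¬ ((k:ℕ) + (b:ℕ) = n) := by
      simp only [ne_eq, Fin.ext_iff, Fin.val_mk] at hb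
      omega
    rw [Smat_eq, if_neg hbv, zero_mul]
  rw [hL, hR, sigma2_eq q n hq, Smat_eq, Smat_eq]
  simp only [Fin.val_mk]
  rw [if_pos (by omega), if_pos (by omega)]
  show _ = _ * qBinom q (n - (n - (k:ℕ))) (n - (m:ℕ))
  rw [show n - (n - (k:ℕ)) = (k:ℕ) from by omega]
  have hsq2 : (-1:ℂ)^((n - (m:ℕ)) * 2) = 1 := by
    rw [neg_one_pow_congr' ((n - (m:ℕ)) * 2) 0 (by omega), pow_zero]
  have hz : q ^ ((e2 (n - (m:ℕ)) : ℤ)) * q ^ (-(e2 (n - (m:ℕ)) : ℤ)) = 1 := by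
    rw [← zpow_add₀ hq]; norm_num
  linear_combination (q ^ (-(e2 (k:ℕ) : ℤ)) * qBinom q (k:ℕ) (n - (m:ℕ)) * (-1:ℂ)^(k:ℕ)
        * ((-1:ℂ)^((n - (m:ℕ)) * 2))) * hz
    + (q ^ (-(e2 (k:ℕ) : ℤ)) * qBinom q (k:ℕ) (n - (m:ℕ)) * (-1:ℂ)^(k:ℕ)) * hsq2

lemma sigma1_inv : ∃ B : Matrix (Fin (n+1)) (Fin (n+1)) ℂ, sigma1 q n * B = 1 ∧ B * sigma1 q n = 1 := by
  have hdet : (sigma1 q n).det = 1 := by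
    have ht : (sigma1 q n).BlockTriangular id := by
      intro i j hij
      exact qBinom_eq_zero q (by simp only [id] at hij; omega)
    rw [Matrix.det_of_upperTriangular ht]
    have : ∀ i : Fin (n+1), sigma1 q n i i = 1 := fun i => qBinom_self q _
    rw [Finset.prod_congr rfl (fun i _ => this i), Finset.prod_const_one]
  have : Invertible (sigma1 q n) := Matrix.invertibleOfIsUnitDet _ (by rw [hdet]; exact isUnit_one)
  exact ⟨⅟(sigma1 q n), mul_invOf_self _, invOf_mul_self _⟩

end final


/-- With `Λ(q) = diag(q^{-(n-r)r})_{r=0}^n`,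
`σ₁(q,n) Λ(q) σ₂(q,n) σ₁(q,n) = S(q)` and `σ₂(q,n) σ₁(q,n) Λ(q) σ₂(q,n) = S(q)`. -/
theorem braid_relation_canonical (n : ℕ) (q : ℂ) (hq : q ≠ 0)
    (Λq : Matrix (Fin (n + 1)) (Fin (n + 1)) ℂ)
    (hΛq : Λq = Matrix.diagonal (fun r : Fin (n + 1) => q ^ (-(((n - r.val) * r.val : ℕ) : ℤ)))) :
    sigma1 q n * Λq * sigma2 q n * sigma1 q n = Smat q n ∧
      sigma2 q n * (sigma1 q n * Λq * sigma2 q n) = Smat q n := by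
  subst hΛq
  set D : Matrix (Fin (n+1)) (Fin (n+1)) ℂ :=
    Matrix.diagonal (fun r : Fin (n + 1) => q ^ (-(((n - r.val) * r.val : ℕ) : ℤ))) with hD
  have h1 : sigma1 q n * D * sigma2 q n * sigma1 q n = Smat q n := by
    ext k m
    exact hBS_entry q n hq k m
  obtain ⟨B, hB1, hB2⟩ := sigma1_inv q n
  have h2 : sigma2 q n * (sigma1 q n * D * sigma2 q n) = Smat q n := by
    have e1 : sigma2 q n * (sigma1 q n * D * sigma2 q n) * sigma1 q n
        = Smat q n * sigma1 q n := by
      rw [mul_assoc, h1, hS2S1 q n hq]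
    calc sigma2 q n * (sigma1 q n * D * sigma2 q n)
        = sigma2 q n * (sigma1 q n * D * sigma2 q n) * (sigma1 q n * B) := by
          rw [hB1, mul_one]
      _ = (sigma2 q n * (sigma1 q n * D * sigma2 q n) * sigma1 q n) * B := by
          simp only [mul_assoc]
      _ = (Smat q n * sigma1 q n) * B := by rw [e1]
      _ = Smat q n := by rw [mul_assoc, hB1, mul_one]
  exact ⟨h1, h2⟩
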